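/- arXiv:physics/0301044 — 2 statements merged into one kernel-verified Lean document; each statement's English description precedes it below -/
import Mathlib

section
/- If τ : ℍ → ℝ is a nonzero linear functional such that the bilinear form G_τ(a,b) = τ(a*b) is symmetric, then G_τ has signature (1,3) or (3,1): there exists a basis of ℍ in which the matrix of G_τ is c·diag(1,-1,-1,-1) for some nonzero real c. -/
open scoped Quaternion QuaternionAlgebra

noncomputable def E : Module.Basis (Fin 4) ℝ (Quaternion ℝ) := QuaternionAlgebra.basisOneIJK (-1) 0 (-1)
def f : Fin 4 → Quaternion ℝ := ![⟨1,0,0,0⟩,⟨0,1,0,0⟩,⟨0,0,1,0⟩,⟨0,0,0,1⟩]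

theorem hEf (α : Fin 4) : E α = f α := by
  have h : E α = (QuaternionAlgebra.linearEquivTuple (-1:ℝ) 0 (-1)).symm (Function.update 0 α 1) :=
    congrFun (Module.Basis.coe_ofEquivFun (QuaternionAlgebra.linearEquivTuple (-1:ℝ) 0 (-1))) α
  rw [h, QuaternionAlgebra.coe_linearEquivTuple_symm]
  apply (QuaternionAlgebra.equivTuple (-1:ℝ) 0 (-1)).injective
  rw [Equiv.apply_symm_apply]
  funext β
  erw [QuaternionAlgebra.equivTuple_apply]
  fin_cases α <;> fin_cases β <;> simp [f, Function.update]

theorem tau_eq (τ : Quaternion ℝ →ₗ[ℝ] ℝ)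
    (hsymm : ∀ a b : Quaternion ℝ, τ (a * b) = τ (b * a)) (q : Quaternion ℝ) :
    τ q = τ 1 * q.re := by
  have hi : τ ⟨0,1,0,0⟩ = 0 := by
    have h := hsymm ⟨0,0,1,0⟩ ⟨0,0,0,1⟩
    have e1 : (⟨0,0,1,0⟩ : Quaternion ℝ) * ⟨0,0,0,1⟩ = ⟨0,1,0,0⟩ := by ext <;> simp
    have e2 : (⟨0,0,0,1⟩ : Quaternion ℝ) * ⟨0,0,1,0⟩ = -⟨0,1,0,0⟩ := by ext <;> simp
    erw [e1, e2, map_neg] at h; linarith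
  have hj : τ ⟨0,0,1,0⟩ = 0 := by
    have h := hsymm ⟨0,0,0,1⟩ ⟨0,1,0,0⟩
    have e1 : (⟨0,0,0,1⟩ : Quaternion ℝ) * ⟨0,1,0,0⟩ = ⟨0,0,1,0⟩ := by ext <;> simp
    have e2 : (⟨0,1,0,0⟩ : Quaternion ℝ) * ⟨0,0,0,1⟩ = -⟨0,0,1,0⟩ := by ext <;> simp
    erw [e1, e2, map_neg] at h; linarith
  have hk : τ ⟨0,0,0,1⟩ = 0 := by
    have h := hsymm ⟨0,1,0,0⟩ ⟨0,0,1,0⟩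
    have e1 : (⟨0,1,0,0⟩ : Quaternion ℝ) * ⟨0,0,1,0⟩ = ⟨0,0,0,1⟩ := by ext <;> simp
    have e2 : (⟨0,0,1,0⟩ : Quaternion ℝ) * ⟨0,1,0,0⟩ = -⟨0,0,0,1⟩ := by ext <;> simp
    erw [e1, e2, map_neg] at h; linarith
  have hq : q = q.re • (1 : Quaternion ℝ) + q.imI • ⟨0,1,0,0⟩ + q.imJ • ⟨0,0,1,0⟩
      + q.imK • ⟨0,0,0,1⟩ := by ext <;> simp <;> erw [QuaternionAlgebra.smul_mk, QuaternionAlgebra.smul_mk, QuaternionAlgebra.smul_mk] <;> simp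
  conv_lhs => rw [hq]
  simp only [map_add]; erw [map_smul, map_smul, map_smul, map_smul, hi, hj, hk]
  simp [mul_comm]

theorem principal_metric_lorentzian (τ : Quaternion ℝ →ₗ[ℝ] ℝ) (hτ : τ ≠ 0)
    (hsymm : ∀ a b : Quaternion ℝ, τ (a * b) = τ (b * a)) :
    ∃ (e : Module.Basis (Fin 4) ℝ (Quaternion ℝ)) (c : ℝ), c ≠ 0 ∧
      ∀ α β : Fin 4,
        τ (e α * e β) = c * Matrix.diagonal ![(1 : ℝ), -1, -1, -1] α β := by
  refine ⟨E, τ 1, ?_, ?_⟩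
  · intro h
    apply hτ
    ext q
    rw [tau_eq τ hsymm q, h]
    simp
  · intro α β
    rw [hEf, hEf, tau_eq τ hsymm, Quaternion.re_mul]
    fin_cases α <;> fin_cases β <;>
      simp [f, Matrix.diagonal, Quaternion.re_mul]
end

section
/- Let A be a finite-dimensional associative real algebra with identity in which the nonzero elements form a group under multiplication. Then the dimension of A over ℝ is 1, 2, or 4; in particular, if A is not commutative, then A is 4-dimensional and isomorphic as an ℝ-algebra to the quaternions ℍ. -/
open Polynomial

lemma frob_poly_aux {p : ℝ[X]} (hm : p.Monic) (h2 : p.natDegree = 2) :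
    p = X ^ 2 + C (p.coeff 1) * X + C (p.coeff 0) := by
  have h3 : p.coeff 2 = 1 := by
    have := hm.leadingCoeff
    rwa [leadingCoeff, h2] at this
  ext n
  match n with
  | 0 => simp
  | 1 => simp
  | 2 => simp [h3, coeff_C, coeff_X]
  | (m+3) =>
    have : p.coeff (m+3) = 0 := coeff_eq_zero_of_natDegree_lt (by omega)
    simp [this, coeff_C, coeff_X, coeff_X_pow]

section Frob
variable {A : Type*} [Ring A] [Nontrivial A] [Algebra ℝ A] [FiniteDimensional ℝ A]
  [NoZeroDivisors A]

lemma frob_quad (a : A) : ∃ t s : ℝ, a * a = t • a + s • (1 : A) := by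
  haveI : IsDomain A := NoZeroDivisors.to_isDomain A
  have hint : IsIntegral ℝ a := Algebra.IsIntegral.isIntegral a
  have hirr := minpoly.irreducible hint
  have hle : (minpoly ℝ a).natDegree ≤ 2 := hirr.natDegree_le_two
  have hmonic := minpoly.monic hint
  have hpos : 0 < (minpoly ℝ a).natDegree := minpoly.natDegree_pos hint
  have haev := minpoly.aeval ℝ a
  interval_cases hd : (minpoly ℝ a).natDegree
  · rw [hmonic.eq_X_add_C hd] at haev
    simp only [map_add, aeval_X, aeval_C] at haev
    set r := (minpoly ℝ a).coeff 0 with hr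
    have ha : a = (-r) • (1 : A) := by
      rw [neg_smul, ← Algebra.algebraMap_eq_smul_one]
      linear_combination (norm := noncomm_ring) haev
    refine ⟨-r, 0, ?_⟩
    rw [ha]
    simp [smul_smul, mul_comm]
  · rw [frob_poly_aux hmonic hd] at haev
    simp only [map_add, map_mul, aeval_X, aeval_C, map_pow] at haev
    refine ⟨-(minpoly ℝ a).coeff 1, -(minpoly ℝ a).coeff 0, ?_⟩
    rw [neg_smul, neg_smul, ← Algebra.algebraMap_eq_smul_one, Algebra.smul_def]
    linear_combination (norm := noncomm_ring) haev - sq a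

lemma frob_imag {a : A} (ha : ∀ r : ℝ, a ≠ r • (1:A)) :
    ∃ (u : A) (e f : ℝ), f ≠ 0 ∧ u * u = -1 ∧ u = e • (1:A) + f • a := by
  obtain ⟨t, s, hq⟩ := frob_quad a
  have hdisc : t^2 + 4*s < 0 := by
    by_contra hge
    push_neg at hge
    set r := Real.sqrt (t^2+4*s) with hrdef
    have hr : r^2 = t^2+4*s := Real.sq_sqrt hge
    have key : (a - ((t+r)/2) • 1) * (a - ((t-r)/2) • 1) = 0 := by
      have expand : (a - ((t+r)/2) • 1) * (a - ((t-r)/2) • 1)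
          = a*a - t • a + (((t+r)/2) * ((t-r)/2)) • (1:A) := by
        simp only [sub_mul, mul_sub, smul_mul_assoc, mul_smul_comm, one_mul, mul_one, smul_smul]
        match_scalars <;> ring
      rw [expand, hq]
      have h2 : ((t+r)/2) * ((t-r)/2) = -s := by nlinarith [hr]
      rw [h2]
      module
    rcases mul_eq_zero.mp key with hk | hk
    · exact ha ((t+r)/2) (sub_eq_zero.mp hk)
    · exact ha ((t-r)/2) (sub_eq_zero.mp hk)
  set d : ℝ := -(t^2/4 + s) with hddef
  have hd : 0 < d := by rw [hddef]; nlinarith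
  have hsd : Real.sqrt d ≠ 0 := by positivity
  have hb : (a - (t/2) • 1) * (a - (t/2) • 1) = (-d) • (1:A) := by
    have expand : (a - (t/2) • 1) * (a - (t/2) • 1)
        = a*a - t • a + ((t/2)*(t/2)) • (1:A) := by
      simp only [sub_mul, mul_sub, smul_mul_assoc, mul_smul_comm, one_mul, mul_one, smul_smul]
      match_scalars <;> ring
    rw [expand, hq]
    match_scalars <;> ring
  refine ⟨(Real.sqrt d)⁻¹ • (a - (t/2) • 1), -(t/2) * (Real.sqrt d)⁻¹, (Real.sqrt d)⁻¹,
    inv_ne_zero hsd, ?_, ?_⟩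
  · rw [smul_mul_assoc, mul_smul_comm, hb, smul_smul, smul_smul]
    have : (Real.sqrt d)⁻¹ * (Real.sqrt d)⁻¹ * -d = -1 := by
      rw [← mul_inv, Real.mul_self_sqrt hd.le]
      field_simp
    rw [this, neg_smul, one_smul]
  · match_scalars <;> ring

lemma frob_central {i x : A} (hi : i * i = -1) (hx : x * i = i * x) :
    ∃ c d : ℝ, x = c • (1:A) + d • i := by
  by_cases hreal : ∃ r : ℝ, x = r • (1:A)
  · obtain ⟨r, hr⟩ := hreal; exact ⟨r, 0, by simp [hr]⟩
  · push_neg at hreal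
    obtain ⟨u, e, f, hf, hu2, hu⟩ := frob_imag hreal
    have hcomm : u * i = i * u := by
      rw [hu]
      simp only [add_mul, mul_add, smul_mul_assoc, mul_smul_comm, one_mul, mul_one, hx]
    have key : (u - i) * (u + i) = 0 := by
      rw [sub_mul, mul_add, mul_add, hu2, hi, hcomm]
      abel
    rcases mul_eq_zero.mp key with hk | hk
    · have hui : u = i := sub_eq_zero.mp hk
      refine ⟨-e/f, 1/f, ?_⟩
      rw [← hui, hu]
      match_scalars <;> field_simp <;> ring
    · have hui : u = -i := by linear_combination (norm := abel) hk
      refine ⟨-e/f, -(1/f), ?_⟩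
      have hx2 : x = (-e/f) • (1:A) + (1/f) • u := by
        rw [hu]; match_scalars <;> field_simp <;> ring
      rw [hx2, hui]
      match_scalars <;> ring

end Frob

theorem frobenius_dimension
    (A : Type*) [Ring A] [Nontrivial A] [Algebra ℝ A] [FiniteDimensional ℝ A]
    (h : ∀ a : A, a ≠ 0 → IsUnit a) :
    (Module.finrank ℝ A = 1 ∨ Module.finrank ℝ A = 2 ∨ Module.finrank ℝ A = 4) ∧
      ((¬ ∀ a b : A, a * b = b * a) →
        Module.finrank ℝ A = 4 ∧ Nonempty (A ≃ₐ[ℝ] Quaternion ℝ)) := by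
  haveI : NoZeroDivisors A := by
    constructor
    intro a b hab
    by_contra hcon
    push_neg at hcon
    obtain ⟨ha, hb⟩ := hcon
    obtain ⟨u, hu⟩ := h a ha
    apply hb
    have hbe : b = ↑u⁻¹ * (a * b) := by rw [← hu, ← mul_assoc, Units.inv_mul, one_mul]
    rw [hab, mul_zero] at hbe
    exact hbe
  have halg : Function.Injective (algebraMap ℝ A) := (algebraMap ℝ A).injective
  have hsmul1 : ∀ r : ℝ, r • (1:A) = 0 → r = 0 := by
    intro r hr
    apply halg
    rw [map_zero, Algebra.algebraMap_eq_smul_one, hr]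
  haveI : NoZeroSMulDivisors ℝ A := by
    constructor
    intro r x hrx
    rw [Algebra.smul_def] at hrx
    rcases mul_eq_zero.mp hrx with h1 | h1
    · left
      apply halg
      rw [map_zero]; exact h1
    · right; exact h1
  by_cases hall : ∀ x : A, ∃ r : ℝ, x = r • (1:A)
  · -- dimension 1, commutative
    have hbij : Function.Bijective (Algebra.linearMap ℝ A) := by
      constructor
      · exact halg
      · intro x
        obtain ⟨r, hr⟩ := hall x
        exact ⟨r, by simp [hr, Algebra.algebraMap_eq_smul_one]⟩
    have hfin : Module.finrank ℝ A = 1 := by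
      have := (LinearEquiv.ofBijective _ hbij).finrank_eq
      simpa using this.symm
    have hcomm : ∀ a b : A, a * b = b * a := by
      intro a b
      obtain ⟨r, hr⟩ := hall a
      rw [hr, smul_mul_assoc, mul_smul_comm, one_mul, mul_one]
    exact ⟨Or.inl hfin, fun hnc => absurd hcomm hnc⟩
  · push_neg at hall
    obtain ⟨a, ha⟩ := hall
    obtain ⟨i, e, f, hf, hi2, hi_eq⟩ := frob_imag ha
    have hi0 : i ≠ 0 := by
      intro h0
      rw [h0, mul_zero] at hi2
      exact one_ne_zero (neg_eq_zero.mp hi2.symm)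
    have hinr : ∀ r : ℝ, i ≠ r • (1:A) := by
      intro r hri
      rw [hri, smul_mul_assoc, mul_smul_comm, one_mul, smul_smul] at hi2
      have : (r*r) • (1:A) = (-1 : ℝ) • (1:A) := by rw [hi2, neg_smul, one_smul]
      have hrr : r * r = -1 := smul_left_injective ℝ one_ne_zero this
      nlinarith
    by_cases hcen : ∀ x : A, x * i = i * x
    · -- dimension 2, commutative
      have hspan : ∀ x : A, ∃ c d : ℝ, x = c • (1:A) + d • i := fun x => frob_central hi2 (hcen x)
      let g : (ℝ × ℝ) →ₗ[ℝ] A :=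
        { toFun := fun p => p.1 • (1:A) + p.2 • i
          map_add' := by
            intro p q
            simp only [Prod.fst_add, Prod.snd_add]
            module
          map_smul' := by
            intro r p
            simp only [Prod.smul_fst, Prod.smul_snd, RingHom.id_apply, smul_eq_mul]
            module }
      have hgbij : Function.Bijective g := by
        constructor
        · rw [← LinearMap.ker_eq_bot, LinearMap.ker_eq_bot']
          intro p hp
          simp only [g, LinearMap.coe_mk, AddHom.coe_mk] at hp
          by_cases h2 : p.2 = 0
          · rw [h2, zero_smul, add_zero] at hp
            have := hsmul1 _ hp
            ext
            · exact this
            · exact h2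
          · exfalso
            have h3 : p.2 • i = -(p.1 • (1:A)) := eq_neg_of_add_eq_zero_right hp
            apply hinr (p.2⁻¹ * -p.1)
            have := congrArg (fun z => p.2⁻¹ • z) h3
            simpa [smul_smul, inv_mul_cancel₀ h2, neg_smul, smul_neg] using this
        · intro x
          obtain ⟨c, d, hcd⟩ := hspan x
          exact ⟨(c, d), hcd.symm⟩
      have hfin : Module.finrank ℝ A = 2 := by
        have := (LinearEquiv.ofBijective _ hgbij).finrank_eq
        simpa using this.symm
      have hcomm : ∀ a b : A, a * b = b * a := by
        intro x y
        obtain ⟨c, d, hcd⟩ := hspan x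
        obtain ⟨c', d', hcd'⟩ := hspan y
        rw [hcd, hcd']
        simp only [add_mul, mul_add, smul_mul_assoc, mul_smul_comm, one_mul, mul_one, smul_smul]
        match_scalars <;> ring
      exact ⟨Or.inr (Or.inl hfin), fun hnc => absurd hcomm hnc⟩
    · -- noncommutative: quaternions
      push_neg at hcen
      obtain ⟨y, hy⟩ := hcen
      set z := y + i*y*i with hzdef
      have h1 : z * i = y*i - i*y := by
        rw [hzdef, add_mul, mul_assoc (i*y) i i, hi2, mul_neg_one, sub_eq_add_neg]
      have h2 : i * z = i*y - y*i := by
        rw [hzdef, mul_add, ← mul_assoc i (i*y) i, ← mul_assoc i i y, hi2, neg_one_mul, neg_mul,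
          sub_eq_add_neg]
      have hanti : z * i = -(i * z) := by rw [h1, h2, neg_sub]
      have hz0 : z ≠ 0 := by
        intro h0
        apply hy
        have : y*i - i*y = 0 := by rw [← h1, h0, zero_mul]
        exact sub_eq_zero.mp this
      have hiz : i * z ≠ 0 := mul_ne_zero hi0 hz0
      have hzzc : (z*z) * i = i * (z*z) :=
        calc z*z*i = z*(z*i) := mul_assoc _ _ _
          _ = z*(-(i*z)) := by rw [hanti]
          _ = -((z*i)*z) := by rw [mul_neg, ← mul_assoc]
          _ = -((-(i*z))*z) := by rw [hanti]
          _ = i*(z*z) := by rw [neg_mul, neg_neg, mul_assoc]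
      obtain ⟨c, d, hcd⟩ := frob_central hi2 hzzc
      have hd0 : d = 0 := by
        have h3 : (z*z)*z = z*(z*z) := mul_assoc _ _ _
        rw [hcd] at h3
        simp only [add_mul, mul_add, smul_mul_assoc, mul_smul_comm, one_mul, mul_one] at h3
        have h4 : d • (i*z) = d • (z*i) := add_left_cancel h3
        rw [hanti, smul_neg] at h4
        have h5 : ((2:ℝ)*d) • (i*z) = 0 := by
          have h5' : d • (i*z) + d • (i*z) = 0 := add_eq_zero_iff_eq_neg.mpr h4
          rwa [← two_smul ℝ, smul_smul] at h5'
        rcases smul_eq_zero.mp h5 with h6 | h6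
        · linarith
        · exact absurd h6 hiz
      have hzz' : z*z = c • (1:A) := by rw [hcd, hd0, zero_smul, add_zero]
      have hzreal : ∀ r : ℝ, z ≠ r • (1:A) := by
        intro r hzr
        apply hiz
        have hcz : z * i = i * z := by
          rw [hzr, smul_mul_assoc, mul_smul_comm, one_mul, mul_one]
        rw [hcz] at hanti
        have : i*z + i*z = 0 := add_eq_zero_iff_eq_neg.mpr hanti
        have h7 : ((2:ℝ)) • (i*z) = 0 := by rwa [two_smul]
        rcases smul_eq_zero.mp h7 with h8 | h8
        · norm_num at h8
        · exact h8
      have hc : c < 0 := by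
        by_contra hcge
        push_neg at hcge
        set r := Real.sqrt c with hrdef
        have hr : r * r = c := Real.mul_self_sqrt hcge
        have key : (z - r • 1) * (z + r • 1) = 0 := by
          have expand : (z - r • 1) * (z + r • 1) = z*z - (r*r) • (1:A) := by
            simp only [sub_mul, mul_add, smul_mul_assoc, mul_smul_comm, one_mul, mul_one,
              smul_smul]
            match_scalars <;> ring
          rw [expand, hzz', hr]
          module
        rcases mul_eq_zero.mp key with hk | hk
        · exact hzreal r (sub_eq_zero.mp hk)
        · have : z = -(r • (1:A)) := eq_neg_of_add_eq_zero_left hk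
          exact hzreal (-r) (by rw [this, neg_smul])
      have hsc : Real.sqrt (-c) ≠ 0 := ne_of_gt (Real.sqrt_pos.mpr (by linarith))
      set j := (Real.sqrt (-c))⁻¹ • z with hjdef
      have hj2 : j * j = -1 := by
        rw [hjdef, smul_mul_assoc, mul_smul_comm, hzz', smul_smul, smul_smul]
        have : (Real.sqrt (-c))⁻¹ * (Real.sqrt (-c))⁻¹ * c = -1 := by
          rw [← mul_inv, Real.mul_self_sqrt (by linarith)]
          field_simp
          rw [div_self hc.ne]
        rw [this, neg_smul, one_smul]
      have hji : j * i = -(i * j) := by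
        rw [hjdef, smul_mul_assoc, mul_smul_comm, hanti, smul_neg]
      -- quaternion basis
      have hnegone : ((-1 : ℝ)) • (1:A) = -1 := by rw [neg_smul, one_smul]
      let q : QuaternionAlgebra.Basis A (-1 : ℝ) 0 (-1) :=
        { i := i, j := j, k := i * j
          i_mul_i := by rw [hi2, hnegone, zero_smul, add_zero]
          j_mul_j := by rw [hj2, hnegone]
          i_mul_j := rfl
          j_mul_i := by rw [hji, zero_smul, zero_sub] }
      let F : Quaternion ℝ →ₐ[ℝ] A := q.liftHom
      have hFinj : Function.Injective F := F.toRingHom.injective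
      have hFapply : ∀ p : Quaternion ℝ,
          F p = algebraMap ℝ A p.re + p.imI • i + p.imJ • j + p.imK • (i*j) := by
        intro p
        rfl
      have hFsurj : Function.Surjective F := by
        intro x
        -- decompose x
        set xp := (2:ℝ)⁻¹ • (x - i*x*i) with hxpdef
        set xm := (2:ℝ)⁻¹ • (x + i*x*i) with hxmdef
        have hsum : xp + xm = x := by
          rw [hxpdef, hxmdef]
          module
        have hxpc : xp * i = i * xp := by
          rw [hxpdef, smul_mul_assoc, mul_smul_comm]
          congr 1
          rw [sub_mul, mul_sub, mul_assoc (i*x) i i, hi2, mul_neg_one,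
            ← mul_assoc i (i*x) i, ← mul_assoc i i x, hi2, neg_one_mul, neg_mul]
          abel
        have hxma : xm * i = -(i * xm) := by
          rw [hxmdef, smul_mul_assoc, mul_smul_comm, ← smul_neg]
          congr 1
          rw [add_mul, mul_add, mul_assoc (i*x) i i, hi2, mul_neg_one,
            ← mul_assoc i (i*x) i, ← mul_assoc i i x, hi2, neg_one_mul, neg_mul]
          abel
        obtain ⟨c1, d1, hcd1⟩ := frob_central hi2 hxpc
        -- w = xm * (-j) commutes with i
        set w := xm * (-j) with hwdef
        have hwi : w * i = i * w := by
          rw [hwdef]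
          have e1 : (xm * -j) * i = xm * (i * j) := by
            rw [mul_assoc, neg_mul, hji, neg_neg]
          have hxma' : i * xm = -(xm * i) := by rw [hxma, neg_neg]
          have e2 : i * (xm * -j) = xm * (i * j) := by
            rw [mul_neg, mul_neg, ← mul_assoc, hxma', neg_mul, neg_neg, mul_assoc]
          rw [e1, e2]
        obtain ⟨c2, d2, hcd2⟩ := frob_central hi2 hwi
        have hxm : xm = w * j := by
          rw [hwdef, mul_assoc, neg_mul, hj2, neg_neg, mul_one]
        refine ⟨⟨c1, d1, c2, d2⟩, ?_⟩
        refine (hFapply _).trans ?_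
        show algebraMap ℝ A c1 + d1 • i + c2 • j + d2 • (i*j) = x
        rw [← hsum, hcd1, hxm, hcd2, Algebra.algebraMap_eq_smul_one]
        simp only [add_mul, smul_mul_assoc, one_mul]
        module
      have E : Quaternion ℝ ≃ₐ[ℝ] A := AlgEquiv.ofBijective F ⟨hFinj, hFsurj⟩
      have hfin : Module.finrank ℝ A = 4 := by
        rw [← E.toLinearEquiv.finrank_eq]
        exact Quaternion.finrank_eq_four
      exact ⟨Or.inr (Or.inr hfin), fun _ => ⟨hfin, ⟨E.symm⟩⟩⟩
end
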